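/- Let H be a Hermitian operator on ℋ^{⊗N}, ε ∈ ℝ, and {C_{ij}}_{i,j∈{0,1}} operators satisfying C_{ij}† = C_{ji}, C_{ij}C_{kl} = δ_{jk}C_{il}, and the commutation relation [H, C_{ij}] = ε(i-j)C_{ij}. Let O = I - ∑_{i,j}(-1)^{i-j}C_{ij}. Then H - O†HO = ε(C_{11} - C_{00}), and consequently [O†HO, H] = 0. -/
import Mathlib


open Matrix

/-- `O := I - ∑_{i,j∈{0,1}} (-1)^{i-j} C_{ij}`. -/
noncomputable def oOfUnits {m : Type*} [Fintype m] [DecidableEq m]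
    (C : Fin 2 → Fin 2 → Matrix m m ℂ) : Matrix m m ℂ :=
  1 - ∑ i : Fin 2, ∑ j : Fin 2, ((-1 : ℂ)) ^ ((i : ℕ) + (j : ℕ)) • C i j

set_option maxHeartbeats 1000000 in
/-- if the `C_{ij}` are signed matrix units satisfying
`[H, C_{ij}] = ε(i-j)C_{ij}`, then for `O = I - ∑(-1)^{i-j}C_{ij}` one has
`H - O†HO = ε(C₁₁ - C₀₀)`, and consequently `[O†HO, H] = 0`. -/
theorem oOfUnits_energy_difference {m : Type*} [Fintype m] [DecidableEq m]
    (H : Matrix m m ℂ) (hH : H.IsHermitian) (ε : ℝ)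
    (C : Fin 2 → Fin 2 → Matrix m m ℂ)
    (hadj : ∀ i j, (C i j)ᴴ = C j i)
    (hmul : ∀ i j k l, C i j * C k l = if j = k then C i l else 0)
    (hcomm : ∀ i j, H * C i j - C i j * H
      = ((ε : ℂ) * (((i : ℕ) : ℂ) - ((j : ℕ) : ℂ))) • C i j) :
    H - (oOfUnits C)ᴴ * H * oOfUnits C = (ε : ℂ) • (C 1 1 - C 0 0) ∧
    Commute ((oOfUnits C)ᴴ * H * oOfUnits C) H := by
  have hO : oOfUnits C = 1 - (C 0 0 - C 0 1 - C 1 0 + C 1 1) := by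
    simp only [oOfUnits, Fin.sum_univ_two, Fin.val_zero, Fin.val_one]
    norm_num
    abel
  set a := C 0 0 with ha'
  set b := C 0 1 with hb'
  set d := C 1 0 with hd'
  set e := C 1 1 with he'
  set s : Matrix m m ℂ := a - b - d + e with hs
  clear_value s
  clear_value a b d e
  -- product relations
  have paa : a * a = a := by rw [ha']; simpa using hmul 0 0 0 0
  have pab : a * b = b := by rw [ha', hb']; simpa using hmul 0 0 0 1
  have pad : a * d = 0 := by rw [ha', hd']; simpa using hmul 0 0 1 0
  have pae : a * e = 0 := by rw [ha', he']; simpa using hmul 0 0 1 1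
  have pba : b * a = 0 := by rw [hb', ha']; simpa using hmul 0 1 0 0
  have pbb : b * b = 0 := by rw [hb']; simpa using hmul 0 1 0 1
  have pbd : b * d = a := by rw [hb', hd', ha']; simpa using hmul 0 1 1 0
  have pbe : b * e = b := by rw [hb', he']; simpa using hmul 0 1 1 1
  have pda : d * a = d := by rw [hd', ha']; simpa using hmul 1 0 0 0
  have pdb : d * b = e := by rw [hd', hb', he']; simpa using hmul 1 0 0 1
  have pdd : d * d = 0 := by rw [hd']; simpa using hmul 1 0 1 0
  have pde : d * e = 0 := by rw [hd', he']; simpa using hmul 1 0 1 1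
  have pea : e * a = 0 := by rw [he', ha']; simpa using hmul 1 1 0 0
  have peb : e * b = 0 := by rw [he', hb']; simpa using hmul 1 1 0 1
  have ped : e * d = d := by rw [he', hd']; simpa using hmul 1 1 1 0
  have pee : e * e = e := by rw [he']; simpa using hmul 1 1 1 1
  -- commutation relations
  have cha : H * a = a * H := by
    rw [ha']
    have h := hcomm 0 0
    simp only [Fin.isValue, Fin.val_zero, Nat.cast_zero, sub_self, mul_zero, zero_smul] at h
    exact sub_eq_zero.mp h
  have che : H * e = e * H := by
    rw [he']
    have h := hcomm 1 1
    simp only [Fin.isValue, Fin.val_one, Nat.cast_one, sub_self, mul_zero, zero_smul] at h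
    exact sub_eq_zero.mp h
  have chb : H * b = b * H - (ε : ℂ) • b := by
    rw [hb']
    have h := hcomm 0 1
    simp only [Fin.isValue, Fin.val_zero, Nat.cast_zero, Fin.val_one, Nat.cast_one, zero_sub,
      mul_neg, mul_one, neg_smul] at h
    rw [sub_eq_iff_eq_add.mp h]; abel
  have chd : H * d = d * H + (ε : ℂ) • d := by
    rw [hd']
    have h := hcomm 1 0
    simp only [Fin.isValue, Fin.val_zero, Nat.cast_zero, Fin.val_one, Nat.cast_one, sub_zero,
      mul_one] at h
    rw [sub_eq_iff_eq_add.mp h]; abel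
  have hO' : oOfUnits C = 1 - s := by rw [hO, hs, ha', hb', hd', he']
  have hsadj : sᴴ = s := by
    rw [hs, ha', hb', hd', he']
    simp only [conjTranspose_add, conjTranspose_sub, hadj]
    abel
  have hOadj : (oOfUnits C)ᴴ = oOfUnits C := by
    rw [hO', conjTranspose_sub, conjTranspose_one, hsadj]
  have hss : s * s = s + s := by
    rw [hs]
    simp only [mul_sub, sub_mul, mul_add, add_mul, paa, pab, pad, pae, pba, pbb, pbd, pbe,
      pda, pdb, pdd, pde, pea, peb, ped, pee]
    abel
  have hsb : s * b = b - e := by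
    rw [hs]
    simp only [sub_mul, add_mul, pab, pbb, pdb, peb]
    abel
  have hsd : s * d = d - a := by
    rw [hs]
    simp only [sub_mul, add_mul, pad, pbd, pdd, ped]
    abel
  have hhs : H * s = s * H + (ε : ℂ) • b - (ε : ℂ) • d := by
    rw [hs]
    simp only [mul_sub, mul_add, sub_mul, add_mul, cha, che, chb, chd]
    abel
  have main : H - (oOfUnits C)ᴴ * H * oOfUnits C = (ε : ℂ) • (e - a) := by
    rw [hOadj, hO']
    have expand : (1 - s) * H * (1 - s) = H - s * H - H * s + s * (H * s) := by
      rw [mul_assoc]; noncomm_ring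
    rw [expand, hhs]
    have hthis : s * (s * H + (ε : ℂ) • b - (ε : ℂ) • d)
        = s * s * H + (ε : ℂ) • (s * b) - (ε : ℂ) • (s * d) := by
      simp only [mul_sub, mul_add, mul_smul_comm, mul_assoc]
    rw [hthis, hss, hsb, hsd, add_mul]
    simp only [smul_sub]
    abel
  refine ⟨main, ?_⟩
  have hform : (oOfUnits C)ᴴ * H * oOfUnits C = H - (ε : ℂ) • (e - a) := by
    rw [← main]; abel
  rw [hform]
  have hce : Commute e H := che.symm
  have hca : Commute a H := cha.symm
  exact (Commute.refl H).sub_left ((hce.sub_left hca).smul_left _)
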